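/- arXiv:1404.6673 — 2 statements merged into one kernel-verified Lean document; each statement's English description precedes it below -/
import Mathlib

section
/- For every ℝ-weighted automaton A over alphabet Σ, the minimum size of a WA equivalent to A equals rank(L_A): there exists a WA of size rank(L_A) equivalent to A, and every WA equivalent to A has size at least rank(L_A). -/
open Matrix

noncomputable section

/-- The matrix `M(w)` of a word: `M(ε) = I`, `M(a₁⋯a_k) = M(a₁)⋯M(a_k)`. -/
def wordProd {S : Type*} {Γ : Type*} [Fintype S] [DecidableEq S]
    (M : Γ → Matrix S S ℝ) (w : List Γ) : Matrix S S ℝ :=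
  (w.map M).prod

/-- The language of the weighted automaton `(M, α, η)`: `L(w) = α M(w) η`. -/
def WAlang {S : Type*} {Γ : Type*} [Fintype S] [DecidableEq S]
    (M : Γ → Matrix S S ℝ) (α η : S → ℝ) (w : List Γ) : ℝ :=
  α ⬝ᵥ (wordProd M w).mulVec η

section Aux

variable {Γ : Type*}

lemma wordProd_append {S : Type*} [Fintype S] [DecidableEq S]
    (M : Γ → Matrix S S ℝ) (x y : List Γ) :
    wordProd M (x ++ y) = wordProd M x * wordProd M y := by
  simp [wordProd]

/-- `φ v = fun y => v ⬝ M(y) η`. -/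
def waPhi {m : ℕ} (M : Γ → Matrix (Fin m) (Fin m) ℝ) (η : Fin m → ℝ) :
    (Fin m → ℝ) →ₗ[ℝ] (List Γ → ℝ) where
  toFun v := fun y => v ⬝ᵥ (wordProd M y).mulVec η
  map_add' u v := by funext y; simp [add_dotProduct]
  map_smul' c v := by funext y; simp [smul_dotProduct]

lemma row_eq_phi {m : ℕ} (M : Γ → Matrix (Fin m) (Fin m) ℝ) (α η : Fin m → ℝ)
    (x : List Γ) :
    (fun y : List Γ => WAlang M α η (x ++ y)) = waPhi M η (α ᵥ* wordProd M x) := by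
  funext y
  simp [waPhi, WAlang, wordProd_append, ← mulVec_mulVec, dotProduct_mulVec]

lemma span_le_range {m : ℕ} (M : Γ → Matrix (Fin m) (Fin m) ℝ) (α η : Fin m → ℝ) :
    Submodule.span ℝ
      (Set.range (fun x : List Γ => fun y : List Γ => WAlang M α η (x ++ y))) ≤
    LinearMap.range (waPhi M η) := by
  rw [Submodule.span_le]
  rintro _ ⟨x, rfl⟩
  exact ⟨α ᵥ* wordProd M x, (row_eq_phi M α η x).symm⟩

end Aux

/-- the minimum size of a WA equivalent to `A` equals the rank of
the Hankel matrix of `L_A`: there is an equivalent WA of that size, and every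
equivalent WA has at least that size. -/
theorem min_size_eq_hankel_rank {Γ : Type*} {n : ℕ}
    (M : Γ → Matrix (Fin n) (Fin n) ℝ) (α η : Fin n → ℝ) :
    (∃ (n' : ℕ) (M' : Γ → Matrix (Fin n') (Fin n') ℝ) (α' η' : Fin n' → ℝ),
      (n' : Cardinal) =
        Module.rank ℝ
          ↥(Submodule.span ℝ
            (Set.range (fun x : List Γ => fun y : List Γ => WAlang M α η (x ++ y)))) ∧
      (∀ w : List Γ, WAlang M' α' η' w = WAlang M α η w)) ∧
    (∀ (n' : ℕ) (M' : Γ → Matrix (Fin n') (Fin n') ℝ) (α' η' : Fin n' → ℝ),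
      (∀ w : List Γ, WAlang M' α' η' w = WAlang M α η w) →
      Module.rank ℝ
        ↥(Submodule.span ℝ
          (Set.range (fun x : List Γ => fun y : List Γ => WAlang M α η (x ++ y)))) ≤
        (n' : Cardinal)) := by
  set L := WAlang M α η with hL
  set rfun : List Γ → (List Γ → ℝ) := fun x => fun y => L (x ++ y) with hrfun
  set V : Submodule ℝ (List Γ → ℝ) := Submodule.span ℝ (Set.range rfun) with hV
  -- V is finite dimensional
  have hle : V ≤ LinearMap.range (waPhi M η) := span_le_range M α η
  have hrange : FiniteDimensional ℝ (LinearMap.range (waPhi M η)) :=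
    Module.Finite.range (waPhi M η)
  have hfd : FiniteDimensional ℝ V := Submodule.finiteDimensional_of_le hle
  constructor
  · -- construction of minimal automaton
    set r := Module.finrank ℝ V with hr
    set b : Module.Basis (Fin r) ℝ V := Module.finBasis ℝ V with hb
    -- shift operator
    set Sh : Γ → ((List Γ → ℝ) →ₗ[ℝ] (List Γ → ℝ)) :=
      fun a => LinearMap.funLeft ℝ ℝ (fun y => a :: y) with hSh
    have hShV : ∀ a : Γ, ∀ f ∈ V, Sh a f ∈ V := by
      intro a f hf
      have : Submodule.map (Sh a) V ≤ V := by
        rw [hV, Submodule.map_span, Submodule.span_le]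
        rintro _ ⟨_, ⟨x, rfl⟩, rfl⟩
        refine Submodule.subset_span ⟨x ++ [a], ?_⟩
        funext y
        simp [hrfun, hSh, LinearMap.funLeft_apply, List.append_assoc]
      exact this ⟨f, hf, rfl⟩
    set T : Γ → (V →ₗ[ℝ] V) := fun a => (Sh a).restrict (hShV a) with hT
    have hTcoe : ∀ (a : Γ) (u : V) (y : List Γ),
        ((T a u : V) : List Γ → ℝ) y = (u : List Γ → ℝ) (a :: y) := by
      intro a u y
      simp [hT, LinearMap.restrict_apply, hSh, LinearMap.funLeft_apply]
    set M' : Γ → Matrix (Fin r) (Fin r) ℝ :=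
      fun a => Matrix.of (fun i j => b.repr (T a (b i)) j) with hM'
    -- key: vecMul transports repr along T a
    have key : ∀ (a : Γ) (u : V),
        (b.repr u : Fin r → ℝ) ᵥ* (M' a) = (b.repr (T a u) : Fin r → ℝ) := by
      intro a u
      funext j
      have h1 : T a u = ∑ i, b.repr u i • T a (b i) := by
        conv_lhs => rw [← b.sum_repr u]
        simp [map_sum, -Module.Basis.sum_repr]
      rw [h1]
      simp [Matrix.vecMul, dotProduct, hM', map_sum, Finsupp.finset_sum_apply,
        Finsupp.smul_apply, smul_eq_mul]
    -- word version
    set Tw : List Γ → V → V := fun w u => w.foldl (fun v a => T a v) u with hTw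
    have keyW : ∀ (w : List Γ) (u : V),
        (b.repr u : Fin r → ℝ) ᵥ* (wordProd M' w) = (b.repr (Tw w u) : Fin r → ℝ) := by
      intro w
      induction w with
      | nil => intro u; simp [wordProd, hTw]
      | cons a w ih =>
        intro u
        have : wordProd M' (a :: w) = M' a * wordProd M' w := by
          simp [wordProd, List.map_cons]
        rw [this, ← Matrix.vecMul_vecMul, key a u, ih (T a u)]
        simp [hTw]
    have hTwcoe : ∀ (w : List Γ) (u : V) (y : List Γ),
        ((Tw w u : V) : List Γ → ℝ) y = (u : List Γ → ℝ) (w ++ y) := by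
      intro w
      induction w with
      | nil => intro u y; simp [hTw]
      | cons a w ih =>
        intro u y
        have : Tw (a :: w) u = Tw w (T a u) := by simp [hTw]
        rw [this, ih (T a u) y, hTcoe]
        simp
    -- initial/final vectors
    have hεmem : rfun [] ∈ V := Submodule.subset_span ⟨[], rfl⟩
    set vε : V := ⟨rfun [], hεmem⟩ with hvε
    set α' : Fin r → ℝ := fun i => b.repr vε i with hα'
    set η' : Fin r → ℝ := fun i => ((b i : V) : List Γ → ℝ) [] with hη'
    refine ⟨r, M', α', η', ?_, ?_⟩
    · rw [hr, Module.finrank_eq_rank]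
    · intro w
      have h1 : WAlang M' α' η' w = (α' ᵥ* wordProd M' w) ⬝ᵥ η' := by
        rw [WAlang, dotProduct_mulVec]
      have h2 : α' ᵥ* wordProd M' w = (b.repr (Tw w vε) : Fin r → ℝ) := by
        rw [hα']
        exact keyW w vε
      rw [h1, h2]
      have h3 : (b.repr (Tw w vε) : Fin r → ℝ) ⬝ᵥ η' =
          ((Tw w vε : V) : List Γ → ℝ) [] := by
        conv_rhs => rw [← b.sum_repr (Tw w vε)]
        simp [dotProduct, hη', Finset.sum_apply, smul_eq_mul, -Module.Basis.sum_repr]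
      rw [h3, hTwcoe w vε []]
      simp [hvε, hrfun]
  · -- lower bound
    intro n' M'' α'' η'' heq
    have hle' : V ≤ LinearMap.range (waPhi M'' η'') := by
      rw [hV, Submodule.span_le]
      rintro _ ⟨x, rfl⟩
      refine ⟨α'' ᵥ* wordProd M'' x, ?_⟩
      rw [← row_eq_phi M'' α'' η'' x]
      funext y
      simp [hrfun, heq]
    have hfin : Module.Finite ℝ (LinearMap.range (waPhi M'' η'')) :=
      Module.Finite.range _
    have hfr : Module.finrank ℝ (LinearMap.range (waPhi M'' η'')) ≤ n' := by
      have := LinearMap.finrank_range_le (waPhi M'' η'')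
      simpa using this
    calc Module.rank ℝ V ≤ Module.rank ℝ (LinearMap.range (waPhi M'' η'')) :=
          Submodule.rank_mono hle'
      _ = (Module.finrank ℝ (LinearMap.range (waPhi M'' η'')) : Cardinal) :=
          (Module.finrank_eq_rank _ _).symm
      _ ≤ (n' : Cardinal) := by exact_mod_cast hfr
end
end

section
/- Let A = (n, Σ, M, α, η) be an ℝ-weighted automaton, let F ∈ ℝ^{n̂×n}, let α̃ ∈ ℝ^{n̂} be a row vector with α = α̃ F, and let à = (n̂, Σ, M̃, α̃, F η) where M̃ : Σ → ℝ^{n̂×n̂}. Let m > 0 and δ ≥ 0 be such that ‖M(a)‖₂ ≤ m, ‖M̃(a)‖₂ ≤ m, and ‖F M(a) − M̃(a) F‖₂ ≤ δ hold for all a ∈ Σ. Then for every nonempty word w ∈ Σ*, |L_A(w) − L_Ã(w)| ≤ δ · |w| · ‖α̃‖₂ · m^{|w|−1} · ‖η‖₂ (and for the empty word L_A(ε) = L_Ã(ε)). -/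
open Matrix

noncomputable section

/-- The ℓ2 operator norm (spectral norm) of a matrix: the operator norm of the
induced linear map between Euclidean spaces. -/
noncomputable def l2OpNorm {m n : ℕ} (A : Matrix (Fin m) (Fin n) ℝ) : ℝ :=
  ‖LinearMap.toContinuousLinearMap (Matrix.toEuclideanLin A)‖

/-- The Euclidean (ℓ2) norm of a vector. -/
noncomputable def euclNorm {n : ℕ} (v : Fin n → ℝ) : ℝ :=
  Real.sqrt (∑ i, v i ^ 2)

open scoped Matrix.Norms.L2Operator in
lemma l2OpNorm_eq {m n : ℕ} (A : Matrix (Fin m) (Fin n) ℝ) : l2OpNorm A = ‖A‖ := rfl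

lemma euclNorm_eq {n : ℕ} (v : Fin n → ℝ) :
    euclNorm v = ‖(WithLp.equiv 2 (Fin n → ℝ)).symm v‖ := by
  rw [EuclideanSpace.norm_eq, euclNorm]
  congr 1
  apply Finset.sum_congr rfl
  intro i _
  rw [WithLp.equiv_symm_apply, WithLp.ofLp_toLp, Real.norm_eq_abs, sq_abs]

open scoped Matrix.Norms.L2Operator in
lemma dot_mulVec_bound {k n : ℕ} (x : Fin k → ℝ) (A : Matrix (Fin k) (Fin n) ℝ) (y : Fin n → ℝ) :
    |x ⬝ᵥ A.mulVec y| ≤ euclNorm x * (l2OpNorm A * euclNorm y) := by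
  have h1 : x ⬝ᵥ A.mulVec y =
      (inner ℝ ((WithLp.equiv 2 (Fin k → ℝ)).symm x)
        ((WithLp.equiv 2 (Fin k → ℝ)).symm (A.mulVec y)) : ℝ) := by
    simp [PiLp.inner_apply, RCLike.inner_apply, WithLp.equiv_symm_apply, dotProduct, mul_comm]
  rw [h1, euclNorm_eq, euclNorm_eq, l2OpNorm_eq]
  refine (abs_real_inner_le_norm _ _).trans ?_
  refine mul_le_mul_of_nonneg_left ?_ (norm_nonneg _)
  exact A.l2_opNorm_mulVec ((WithLp.equiv 2 (Fin n → ℝ)).symm y)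

lemma wordProd_nil {S Γ : Type*} [Fintype S] [DecidableEq S] (M : Γ → Matrix S S ℝ) :
    wordProd M ([] : List Γ) = 1 := rfl

lemma wordProd_cons {S Γ : Type*} [Fintype S] [DecidableEq S] (M : Γ → Matrix S S ℝ)
    (a : Γ) (w : List Γ) : wordProd M (a :: w) = M a * wordProd M w := by
  simp [wordProd]

open scoped Matrix.Norms.L2Operator in
lemma l2_norm_one_le {n : ℕ} : ‖(1 : Matrix (Fin n) (Fin n) ℝ)‖ ≤ 1 := by
  rw [Matrix.cstar_norm_def, _root_.map_one]
  exact ContinuousLinearMap.norm_id_le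

open scoped Matrix.Norms.L2Operator in
lemma norm_wordProd_le {n : ℕ} {Γ : Type*} (M : Γ → Matrix (Fin n) (Fin n) ℝ) {m : ℝ}
    (hm : 0 ≤ m) (hm1 : ∀ a, ‖M a‖ ≤ m) : ∀ w : List Γ, ‖wordProd M w‖ ≤ m ^ w.length := by
  intro w
  induction w with
  | nil => simpa [wordProd_nil] using l2_norm_one_le
  | cons a w ih =>
      rw [wordProd_cons]
      calc ‖M a * wordProd M w‖ ≤ ‖M a‖ * ‖wordProd M w‖ := Matrix.l2_opNorm_mul _ _
        _ ≤ m * m ^ w.length :=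
            mul_le_mul (hm1 a) ih (norm_nonneg _) hm
        _ = m ^ (a :: w).length := by rw [List.length_cons, pow_succ']

open scoped Matrix.Norms.L2Operator in
lemma telescope_bound {Γ : Type*} {n nh : ℕ}
    (M : Γ → Matrix (Fin n) (Fin n) ℝ)
    (Mt : Γ → Matrix (Fin nh) (Fin nh) ℝ) (F : Matrix (Fin nh) (Fin n) ℝ)
    {m δ : ℝ} (hm : 0 ≤ m) (hδ : 0 ≤ δ)
    (hM : ∀ a, ‖M a‖ ≤ m) (hMt : ∀ a, ‖Mt a‖ ≤ m)
    (hF : ∀ a, ‖F * M a - Mt a * F‖ ≤ δ) :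
    ∀ w : List Γ, ‖F * wordProd M w - wordProd Mt w * F‖ ≤
      δ * w.length * m ^ (w.length - 1) := by
  intro w
  induction w with
  | nil => simp [wordProd_nil]
  | cons a w ih =>
      rw [wordProd_cons, wordProd_cons]
      have hsplit : F * (M a * wordProd M w) - Mt a * wordProd Mt w * F =
          (F * M a - Mt a * F) * wordProd M w +
          Mt a * (F * wordProd M w - wordProd Mt w * F) := by
        simp only [Matrix.sub_mul, Matrix.mul_sub, Matrix.mul_assoc]
        abel
      rw [hsplit]
      have h1 : ‖(F * M a - Mt a * F) * wordProd M w‖ ≤ δ * m ^ w.length :=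
        (Matrix.l2_opNorm_mul _ _).trans
          (mul_le_mul (hF a) (norm_wordProd_le M hm hM w) (norm_nonneg _) hδ)
      have h2 : ‖Mt a * (F * wordProd M w - wordProd Mt w * F)‖ ≤
          m * (δ * w.length * m ^ (w.length - 1)) :=
        (Matrix.l2_opNorm_mul _ _).trans
          (mul_le_mul (hMt a) ih (norm_nonneg _) hm)
      refine (norm_add_le _ _).trans ((add_le_add h1 h2).trans ?_)
      rw [List.length_cons]
      cases w with
      | nil => simp
      | cons b t =>
          have : m * (δ * (b :: t).length * m ^ ((b :: t).length - 1)) =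
              δ * (b :: t).length * m ^ (b :: t).length := by
            rw [List.length_cons]
            simp only [Nat.add_sub_cancel]
            ring
          rw [this, Nat.add_sub_cancel]
          have hlen : (0:ℝ) ≤ δ * m ^ (b :: t).length := by positivity
          push_cast
          nlinarith [pow_nonneg hm (b::t).length]


/-- if `α = α̃ F`, `‖M(a)‖₂ ≤ m`, `‖M̃(a)‖₂ ≤ m` and
`‖F M(a) − M̃(a) F‖₂ ≤ δ` for all letters `a`, then for `Ã = (M̃, α̃, F η)`
and every nonempty word `w`,
`|L_A(w) − L_Ã(w)| ≤ δ |w| ‖α̃‖₂ m^{|w|−1} ‖η‖₂`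
(and the languages agree on the empty word). -/
theorem language_error_bound {Γ : Type*} {n nh : ℕ}
    (M : Γ → Matrix (Fin n) (Fin n) ℝ) (α η : Fin n → ℝ)
    (Mt : Γ → Matrix (Fin nh) (Fin nh) ℝ) (F : Matrix (Fin nh) (Fin n) ℝ)
    (αt : Fin nh → ℝ)
    (hα : α = Matrix.vecMul αt F)
    (m δ : ℝ) (hm : 0 < m) (hδ : 0 ≤ δ)
    (hM : ∀ a, l2OpNorm (M a) ≤ m)
    (hMt : ∀ a, l2OpNorm (Mt a) ≤ m)
    (hF : ∀ a, l2OpNorm (F * M a - Mt a * F) ≤ δ) :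
    (∀ w : List Γ, w ≠ [] →
      |WAlang M α η w - WAlang Mt αt (F.mulVec η) w| ≤
        δ * w.length * euclNorm αt * m ^ (w.length - 1) * euclNorm η) ∧
    WAlang M α η ([] : List Γ) = WAlang Mt αt (F.mulVec η) ([] : List Γ) := by
  simp only [l2OpNorm_eq] at hM hMt hF
  have key : ∀ w : List Γ, WAlang M α η w - WAlang Mt αt (F.mulVec η) w =
      αt ⬝ᵥ ((F * wordProd M w - wordProd Mt w * F).mulVec η) := by
    intro w
    rw [WAlang, WAlang, hα, Matrix.sub_mulVec, dotProduct_sub]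
    simp only [Matrix.dotProduct_mulVec, Matrix.vecMul_vecMul]
  constructor
  · intro w hw
    rw [key w]
    refine (dot_mulVec_bound _ _ _).trans ?_
    have hE : 0 ≤ euclNorm η := Real.sqrt_nonneg _
    have hA : 0 ≤ euclNorm αt := Real.sqrt_nonneg _
    have := telescope_bound M Mt F hm.le hδ hM hMt hF w
    calc euclNorm αt * (l2OpNorm (F * wordProd M w - wordProd Mt w * F) * euclNorm η)
        ≤ euclNorm αt * ((δ * w.length * m ^ (w.length - 1)) * euclNorm η) := by
          refine mul_le_mul_of_nonneg_left (mul_le_mul_of_nonneg_right ?_ hE) hA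
          rw [l2OpNorm_eq]; exact this
      _ = δ * w.length * euclNorm αt * m ^ (w.length - 1) * euclNorm η := by ring
  · rw [WAlang, WAlang, wordProd_nil, wordProd_nil, hα, Matrix.one_mulVec, Matrix.one_mulVec,
      Matrix.dotProduct_mulVec]
end
end
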